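/- Define d(n) = 8n(n+1)(H_n² - H_n^{(2)}) - 2n(15n+7)H_n + 45n² - n, S(n) = 2n(H_n - 1), and s2(n) = 4n(H_n² - H_n^{(2)}) - 6n(H_n - 1). Then for every n ≥ 2, d(n) = (2/(n-1))·∑_{k=1}^{n-1} [d(k) + S(k)·S(n-k) + (n-k)·s2(k) + 4(n-k)·S(k)] + (2/3)n(n+1). -/

import Mathlib

open Finset

noncomputable def H (n : ℕ) : ℝ := ∑ i ∈ Finset.range n, (1 : ℝ) / (i + 1)

noncomputable def H2 (n : ℕ) : ℝ := ∑ i ∈ Finset.range n, (1 : ℝ) / ((i + 1) ^ 2)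

noncomputable def d (n : ℕ) : ℝ :=
  8 * n * (n + 1) * (H n ^ 2 - H2 n) - 2 * n * (15 * n + 7) * H n + 45 * n ^ 2 - n

noncomputable def S (n : ℕ) : ℝ := 2 * n * (H n - 1)

noncomputable def s2 (n : ℕ) : ℝ := 4 * n * (H n ^ 2 - H2 n) - 6 * n * (H n - 1)

lemma H_one : H 1 = 1 := by simp [H]

lemma H_succ (n : ℕ) : H (n + 1) = H n + 1 / ((n : ℝ) + 1) := by
  simp [H, Finset.sum_range_succ]

lemma H2_succ (n : ℕ) : H2 (n + 1) = H2 n + 1 / (((n : ℝ) + 1) ^ 2) := by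
  simp [H2, Finset.sum_range_succ]

lemma S_succ (n : ℕ) : S (n + 1) = S n + 2 * H n := by
  have h : ((n : ℝ) + 1) ≠ 0 := by positivity
  simp only [S, H_succ]
  push_cast
  field_simp
  ring

lemma sum_reflect (f : ℕ → ℝ) (n : ℕ) :
    ∑ k ∈ Icc 1 (n - 1), f (n - k) = ∑ k ∈ Icc 1 (n - 1), f k := by
  rcases n with _ | m
  · simp
  · simp only [Nat.add_sub_cancel]
    rw [← Finset.Ico_add_one_right_eq_Icc, Finset.sum_Ico_eq_sum_range, Finset.sum_Ico_eq_sum_range]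
    simp only [Nat.add_sub_cancel]
    rw [← Finset.sum_range_reflect (fun i => f (1 + i)) m]
    apply Finset.sum_congr rfl
    intro i hi
    simp only [Finset.mem_range] at hi
    congr 1
    omega

lemma sum_one' (m : ℕ) : ∑ k ∈ Icc 1 m, (1 : ℝ) = m := by
  simp

lemma sum_k (m : ℕ) : ∑ k ∈ Icc 1 m, (k : ℝ) = m * (m + 1) / 2 := by
  induction m with
  | zero => simp
  | succ m ih =>
    rw [Finset.sum_Icc_succ_top (by omega), ih]
    push_cast; ring

lemma sum_H (m : ℕ) : ∑ k ∈ Icc 1 m, H k = ((m : ℝ) + 1) * H m - m := by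
  induction m with
  | zero => simp [H]
  | succ m ih =>
    rw [Finset.sum_Icc_succ_top (by omega), ih, H_succ]
    have h : ((m : ℝ) + 1) ≠ 0 := by positivity
    push_cast; field_simp; ring

lemma sum_kH (m : ℕ) : ∑ k ∈ Icc 1 m, (k : ℝ) * H k
    = (m : ℝ) * (m + 1) / 2 * H m - m * (m - 1) / 4 := by
  induction m with
  | zero => simp
  | succ m ih =>
    rw [Finset.sum_Icc_succ_top (by omega), ih, H_succ]
    have h : ((m : ℝ) + 1) ≠ 0 := by positivity
    push_cast; field_simp; ring

lemma sum_kHsq (m : ℕ) : ∑ k ∈ Icc 1 m, (k : ℝ) * H k ^ 2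
    = (m : ℝ) * (m + 1) / 2 * H m ^ 2 + (-(m : ℝ) ^ 2 + m + 1) / 2 * H m
      + ((m : ℝ) ^ 2 - 3 * m) / 4 := by
  induction m with
  | zero => simp [H]
  | succ m ih =>
    rw [Finset.sum_Icc_succ_top (by omega), ih, H_succ]
    have h : ((m : ℝ) + 1) ≠ 0 := by positivity
    push_cast; field_simp; ring

lemma sum_kH2 (m : ℕ) : ∑ k ∈ Icc 1 m, (k : ℝ) * H2 k
    = (m : ℝ) * (m + 1) / 2 * H2 m + H m / 2 - (m : ℝ) / 2 := by
  induction m with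
  | zero => simp [H, H2]
  | succ m ih =>
    rw [Finset.sum_Icc_succ_top (by omega), ih, H_succ, H2_succ]
    have h : ((m : ℝ) + 1) ≠ 0 := by positivity
    push_cast; field_simp; ring

lemma sum_inv_shift (n : ℕ) : ∑ i ∈ range n, (1 : ℝ) / ((i : ℝ) + 2) = H (n + 1) - 1 := by
  rw [H, Finset.sum_range_succ']
  push_cast
  ring_nf

lemma sum_inv_reflect (m : ℕ) : ∑ i ∈ range m, (1 : ℝ) / ((m : ℝ) - i) = H m := by
  rw [H, ← Finset.sum_range_reflect (fun i => (1 : ℝ) / ((i : ℝ) + 1)) m]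
  apply Finset.sum_congr rfl
  intro i hi
  simp only [Finset.mem_range] at hi
  have h1 : (m - 1 - i : ℕ) = m - (i + 1) := by omega
  have h2 : ((m - (i + 1) : ℕ) : ℝ) = (m : ℝ) - (i + 1) := by
    have : i + 1 ≤ m := by omega
    push_cast [Nat.cast_sub this]; ring
  rw [h1, h2]
  congr 1
  ring

lemma C3 (n : ℕ) (hn : 1 ≤ n) :
    ∑ k ∈ Icc 1 (n - 1), H k / ((n : ℝ) - k) = H n ^ 2 - H2 n := by
  induction n, hn using Nat.le_induction with
  | base => simp [H, H2]
  | succ n hn ih =>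
    obtain ⟨m, rfl⟩ : ∃ m, n = m + 1 := ⟨n - 1, by omega⟩
    simp only [Nat.add_sub_cancel] at ih ⊢
    rw [← Finset.Ico_add_one_right_eq_Icc, Finset.sum_Ico_eq_sum_range] at ih ⊢
    simp only [Nat.add_sub_cancel] at ih ⊢
    rw [Finset.sum_range_succ']
    have key : ∑ i ∈ range m, H (1 + (i + 1)) / ((↑(m + 1 + 1) : ℝ) - ↑(1 + (i + 1)))
        = (∑ i ∈ range m, H (1 + i) / ((↑(m + 1) : ℝ) - ↑(1 + i)))
          + (1 / ((m : ℝ) + 2)) * ((∑ i ∈ range m, 1 / ((i : ℝ) + 2))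
            + ∑ i ∈ range m, 1 / ((m : ℝ) - i)) := by
      rw [mul_add, Finset.mul_sum, Finset.mul_sum, ← Finset.sum_add_distrib,
        ← Finset.sum_add_distrib]
      apply Finset.sum_congr rfl
      intro i hi
      simp only [mem_range] at hi
      have hi' : (i : ℝ) < m := by exact_mod_cast hi
      have hmi : ((m : ℝ) - i) ≠ 0 := by intro h; nlinarith
      have hm2 : ((m : ℝ) + 2) ≠ 0 := by positivity
      have hi2 : ((i : ℝ) + 2) ≠ 0 := by positivity
      have h1 : 1 + (i + 1) = (1 + i) + 1 := by omega
      have e1 : ((m + 1 + 1 : ℕ) : ℝ) - ((1 + i + 1 : ℕ) : ℝ) = (m : ℝ) - i := by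
        push_cast; ring
      have e2 : ((m + 1 : ℕ) : ℝ) - ((1 + i : ℕ) : ℝ) = (m : ℝ) - i := by
        push_cast; ring
      have e3 : ((1 + i : ℕ) : ℝ) + 1 = (i : ℝ) + 2 := by push_cast; ring
      rw [h1, H_succ, e1, e2, e3]
      field_simp
      ring
    rw [key, ih, sum_inv_shift, sum_inv_reflect]
    have hHm : H m = H (m + 1) - 1 / ((m : ℝ) + 1) := by rw [H_succ]; ring
    rw [hHm, H_succ (m + 1), H2_succ (m + 1)]
    have h1 : ((m : ℝ) + 1) ≠ 0 := by positivity
    have h2 : ((m : ℝ) + 1 + 1) ≠ 0 := by positivity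
    have hH1 : H (1 + 0) = 1 := by simp [H]
    rw [hH1]
    push_cast
    field_simp
    ring

lemma C2 (n : ℕ) (hn : 1 ≤ n) :
    ∑ k ∈ Icc 1 (n - 1), (k : ℝ) * H k * H (n - k)
      = (n : ℝ) * (n + 1) / 2 * (H n ^ 2 - H2 n) - (n : ℝ) ^ 2 * H n + (n : ℝ) ^ 2 := by
  induction n, hn using Nat.le_induction with
  | base => simp [H, H2]
  | succ n hn ih =>
    obtain ⟨m, rfl⟩ : ∃ m, n = m + 1 := ⟨n - 1, by omega⟩
    simp only [Nat.add_sub_cancel] at ih ⊢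
    rw [Finset.sum_Icc_succ_top (by omega : 1 ≤ m + 1)]
    have key : ∀ k ∈ Icc 1 m, (k : ℝ) * H k * H (m + 1 + 1 - k)
        = (k : ℝ) * H k * H (m + 1 - k)
          + ((m : ℝ) + 2) * (H k / ((↑(m + 2) : ℝ) - ↑k)) - H k := by
      intro k hk
      simp only [mem_Icc] at hk
      have h1 : m + 1 + 1 - k = (m + 1 - k) + 1 := by omega
      have h2 : ((m + 1 - k : ℕ) : ℝ) = (m : ℝ) + 1 - k := by
        have : k ≤ m + 1 := by omega
        push_cast [Nat.cast_sub this]; ring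
      have hk' : (k : ℝ) ≤ m := by exact_mod_cast hk.2
      have h3 : ((m : ℝ) + 1 - k) + 1 ≠ 0 := by linarith
      have h4 : ((m + 2 : ℕ) : ℝ) - k = ((m : ℝ) + 1 - k) + 1 := by push_cast; ring
      rw [h1, H_succ, h2, h4]
      field_simp
      ring
    rw [Finset.sum_congr rfl key]
    have hC3 := C3 (m + 2) (by omega)
    rw [show m + 2 - 1 = m + 1 from by omega,
      Finset.sum_Icc_succ_top (by omega : 1 ≤ m + 1)] at hC3
    have hsplit : ∑ k ∈ Icc 1 m,
        ((k : ℝ) * H k * H (m + 1 - k)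
          + ((m : ℝ) + 2) * (H k / ((↑(m + 2) : ℝ) - ↑k)) - H k)
        = (∑ k ∈ Icc 1 m, (k : ℝ) * H k * H (m + 1 - k))
          + ((m : ℝ) + 2) * (∑ k ∈ Icc 1 m, H k / ((↑(m + 2) : ℝ) - ↑k))
          - ∑ k ∈ Icc 1 m, H k := by
      rw [Finset.sum_sub_distrib, Finset.sum_add_distrib, Finset.mul_sum]
    rw [hsplit, ih, sum_H]
    have htop : (↑(m + 2) : ℝ) - ↑(m + 1) = 1 := by push_cast; ring
    rw [htop] at hC3
    have hsum : ∑ k ∈ Icc 1 m, H k / ((↑(m + 2) : ℝ) - ↑k)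
        = (H (m + 2) ^ 2 - H2 (m + 2)) - H (m + 1) := by
      have := hC3
      field_simp at this ⊢
      linarith
    rw [hsum]
    have e1 : H (m + 1 + 1 - (m + 1)) = 1 := by
      rw [show m + 1 + 1 - (m + 1) = 1 from by omega, H_one]
    rw [e1]
    have e2 : H (m + 2) = H (m + 1) + 1 / ((m : ℝ) + 2) := by
      rw [show m + 2 = m + 1 + 1 from by omega, H_succ]; push_cast; ring
    have e3 : H2 (m + 2) = H2 (m + 1) + 1 / ((m : ℝ) + 2) ^ 2 := by
      rw [show m + 2 = m + 1 + 1 from by omega, H2_succ]; push_cast; ring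
    have e4 : H m = H (m + 1) - 1 / ((m : ℝ) + 1) := by
      rw [H_succ]; ring
    rw [e2, e3, e4]
    have h1 : ((m : ℝ) + 1) ≠ 0 := by positivity
    have h2 : ((m : ℝ) + 2) ≠ 0 := by positivity
    push_cast
    field_simp
    ring

lemma main (n : ℕ) (hn : 1 ≤ n) :
    ∑ k ∈ Icc 1 (n - 1),
        (d k + S k * S (n - k) + ((n : ℝ) - k) * s2 k + 4 * ((n : ℝ) - k) * S k)
      = (((n : ℝ) - 1) / 2) * (d n - 2 / 3 * n * (n + 1)) := by
  induction n, hn using Nat.le_induction with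
  | base => norm_num
  | succ n hn ih =>
    obtain ⟨m, rfl⟩ : ∃ m, n = m + 1 := ⟨n - 1, by omega⟩
    simp only [Nat.add_sub_cancel] at ih ⊢
    rw [Finset.sum_Icc_succ_top (by omega : 1 ≤ m + 1)]
    have key : ∀ k ∈ Icc 1 m,
        d k + S k * S (m + 1 + 1 - k) + ((↑(m + 1 + 1) : ℝ) - k) * s2 k
          + 4 * ((↑(m + 1 + 1) : ℝ) - k) * S k
        = (d k + S k * S (m + 1 - k) + ((↑(m + 1) : ℝ) - k) * s2 k
            + 4 * ((↑(m + 1) : ℝ) - k) * S k)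
          + (4 * ((k : ℝ) * H k * H (m + 1 - k)) - 4 * ((k : ℝ) * H (m + 1 - k))
            + 4 * ((k : ℝ) * H k ^ 2) - 4 * ((k : ℝ) * H2 k)
            + 2 * ((k : ℝ) * H k) - 2 * (k : ℝ)) := by
      intro k hk
      simp only [mem_Icc] at hk
      rw [show m + 1 + 1 - k = (m + 1 - k) + 1 from by omega, S_succ]
      simp only [S, s2]
      push_cast
      ring
    rw [Finset.sum_congr rfl key, Finset.sum_add_distrib, ih]
    -- the correction sum
    have hC2m : ∑ k ∈ Icc 1 m, (k : ℝ) * H k * H (m + 1 - k)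
        = ((m : ℝ) + 1) * ((m : ℝ) + 2) / 2 * (H (m + 1) ^ 2 - H2 (m + 1))
          - ((m : ℝ) + 1) ^ 2 * H (m + 1) + ((m : ℝ) + 1) ^ 2 := by
      have h := C2 (m + 1) (by omega)
      simp only [Nat.add_sub_cancel] at h
      rw [h]; push_cast; ring
    have hM1 : ∑ k ∈ Icc 1 m, (k : ℝ) * H (m + 1 - k)
        = ((m : ℝ) + 1) * (((m : ℝ) + 1) * H m - m)
          - ((m : ℝ) * (m + 1) / 2 * H m - m * (m - 1) / 4) := by
      have hr := sum_reflect (fun j => ((m + 1 - j : ℕ) : ℝ) * H j) (m + 1)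
      simp only [Nat.add_sub_cancel] at hr
      have hl : ∑ k ∈ Icc 1 m, (k : ℝ) * H (m + 1 - k)
          = ∑ k ∈ Icc 1 m, ((m + 1 - (m + 1 - k) : ℕ) : ℝ) * H (m + 1 - k) := by
        apply Finset.sum_congr rfl
        intro k hk
        simp only [mem_Icc] at hk
        congr 2
        omega
      rw [hl, hr]
      have hl2 : ∑ k ∈ Icc 1 m, ((m + 1 - k : ℕ) : ℝ) * H k
          = ∑ k ∈ Icc 1 m, ((((m : ℝ) + 1) * H k) - (k : ℝ) * H k) := by
        apply Finset.sum_congr rfl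
        intro k hk
        simp only [mem_Icc] at hk
        have : ((m + 1 - k : ℕ) : ℝ) = (m : ℝ) + 1 - k := by
          have hk' : k ≤ m + 1 := by omega
          push_cast [Nat.cast_sub hk']; ring
        rw [this]; ring
      rw [hl2, Finset.sum_sub_distrib, ← Finset.mul_sum, sum_H, sum_kH]
    have hG : ∑ k ∈ Icc 1 m,
        (4 * ((k : ℝ) * H k * H (m + 1 - k)) - 4 * ((k : ℝ) * H (m + 1 - k))
          + 4 * ((k : ℝ) * H k ^ 2) - 4 * ((k : ℝ) * H2 k)
          + 2 * ((k : ℝ) * H k) - 2 * (k : ℝ))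
        = 4 * (∑ k ∈ Icc 1 m, (k : ℝ) * H k * H (m + 1 - k))
          - 4 * (∑ k ∈ Icc 1 m, (k : ℝ) * H (m + 1 - k))
          + 4 * (∑ k ∈ Icc 1 m, (k : ℝ) * H k ^ 2)
          - 4 * (∑ k ∈ Icc 1 m, (k : ℝ) * H2 k)
          + 2 * (∑ k ∈ Icc 1 m, (k : ℝ) * H k)
          - 2 * (∑ k ∈ Icc 1 m, (k : ℝ)) := by
      rw [Finset.sum_sub_distrib, Finset.sum_add_distrib, Finset.sum_sub_distrib,
        Finset.sum_add_distrib, Finset.sum_sub_distrib,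
        ← Finset.mul_sum, ← Finset.mul_sum, ← Finset.mul_sum, ← Finset.mul_sum,
        ← Finset.mul_sum, ← Finset.mul_sum]
    rw [hG, hC2m, hM1, sum_kHsq, sum_kH2, sum_kH, sum_k]
    -- top term simplification
    rw [show m + 1 + 1 - (m + 1) = 1 from by omega]
    have hS1 : S 1 = 0 := by simp [S, H]
    rw [hS1]
    -- now pure algebra
    simp only [d, s2, S]
    have e2 : H (m + 1 + 1) = H (m + 1) + 1 / ((m : ℝ) + 2) := by
      rw [H_succ]; push_cast; ring
    have e3 : H2 (m + 1 + 1) = H2 (m + 1) + 1 / ((m : ℝ) + 2) ^ 2 := by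
      rw [H2_succ]; push_cast; ring
    have e4 : H m = H (m + 1) - 1 / ((m : ℝ) + 1) := by rw [H_succ]; ring
    have e5 : H2 m = H2 (m + 1) - 1 / ((m : ℝ) + 1) ^ 2 := by rw [H2_succ]; ring
    rw [e2, e3, e4, e5]
    have h1 : ((m : ℝ) + 1) ≠ 0 := by positivity
    have h2 : ((m : ℝ) + 2) ≠ 0 := by positivity
    push_cast
    field_simp
    ring

theorem d_recurrence (n : ℕ) (hn : 2 ≤ n) :
    d n = (2 / ((n : ℝ) - 1)) * ∑ k ∈ Finset.Icc 1 (n - 1),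
        (d k + S k * S (n - k) + ((n : ℝ) - k) * s2 k + 4 * ((n : ℝ) - k) * S k)
      + (2 / 3) * n * (n + 1) := by
  have h := main n (by omega)
  have hn' : (2 : ℝ) ≤ (n : ℝ) := by exact_mod_cast hn
  have hne : ((n : ℝ) - 1) ≠ 0 := by intro h0; linarith
  rw [h]
  field_simp
  ring
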